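/- Let n ≥ 1 and let Ψ be a local symplectomorphism of ω₀ on ℝ^{2n} such that on a neighbourhood of 0: p₁∘Ψ = p₁; qᵢ∘Ψ ∈ I_{2i−1} for every i = 1,…,n; and pᵢ∘Ψ − pᵢ ∈ I_{2i−2} for every i = 2,…,n (here pᵢ∘Ψ and qᵢ∘Ψ denote the components of Ψ). Then Ψ is the identity map on a neighbourhood of 0. -/

import Mathlib

open Filter Topology

noncomputable section

/-- `ℝ^{2n}` with coordinates `(p, q) = (p₁,…,pₙ,q₁,…,qₙ)`. -/
abbrev PQ (n : ℕ) : Type := (Fin n → ℝ) × (Fin n → ℝ)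

/-- A smooth germ at `0`: a function which is `C^∞` on some neighbourhood of `0`. -/
def SmoothGerm {E F : Type*} [NormedAddCommGroup E] [NormedSpace ℝ E]
    [NormedAddCommGroup F] [NormedSpace ℝ F] (f : E → F) : Prop :=
  ∃ U ∈ 𝓝 (0 : E), ContDiffOn ℝ (⊤ : ℕ∞) f U

/-- The standard symplectic form `ω₀ = Σᵢ dpᵢ∧dqᵢ` on `ℝ^{2n}` as a constant
alternating bilinear form. -/
def omega0 (n : ℕ) (u v : PQ n) : ℝ := ∑ i : Fin n, (u.1 i * v.2 i - u.2 i * v.1 i)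

/-- A local symplectomorphism of `ω₀`: `Ψ(0) = 0`, smooth near `0`, invertible
derivative, and `DΨ(z)` preserves `ω₀` for all `z` near `0`. -/
def IsLocalSymp (n : ℕ) (Ψ : PQ n → PQ n) : Prop :=
  Ψ 0 = 0 ∧ SmoothGerm Ψ ∧ Function.Bijective ⇑(fderiv ℝ Ψ 0) ∧
    ∀ᶠ z in 𝓝 (0 : PQ n), ∀ u v : PQ n,
      omega0 n (fderiv ℝ Ψ z u) (fderiv ℝ Ψ z v) = omega0 n u v

/-- The `j`-th generator (0-indexed) of the list `q₁,p₁,q₂,p₂,…,qₙ,pₙ`. -/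
def genFun (n j : ℕ) (z : PQ n) : ℝ :=
  if h : j / 2 < n then (if j % 2 = 0 then z.2 ⟨j / 2, h⟩ else z.1 ⟨j / 2, h⟩) else 0

/-- Membership (as germs at `0`) in the ideal `I_k` generated by the first `k`
functions of the list `q₁,p₁,q₂,p₂,…,qₙ,pₙ`. -/
def InIdeal (n k : ℕ) (g : PQ n → ℝ) : Prop :=
  ∃ c : Fin k → (PQ n → ℝ), (∀ j, SmoothGerm (c j)) ∧
    ∀ᶠ z in 𝓝 (0 : PQ n), g z = ∑ j : Fin k, c j z * genFun n j.1 z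

section Aux

variable {n : ℕ}

lemma omega0_pdir (j : Fin n) (y : PQ n) :
    omega0 n (Pi.single j 1, (0 : Fin n → ℝ)) y = y.2 j := by
  simp [omega0, Pi.single_apply, ite_mul, Finset.sum_ite_eq']

lemma omega0_qdir (j : Fin n) (y : PQ n) :
    omega0 n ((0 : Fin n → ℝ), Pi.single j 1) y = -(y.1 j) := by
  simp [omega0, Pi.single_apply, ite_mul, Finset.sum_ite_eq']

lemma omega0_zero_left (v : PQ n) : omega0 n 0 v = 0 := by simp [omega0]

lemma omega0_sub_left (a b v : PQ n) :
    omega0 n (a - b) v = omega0 n a v - omega0 n b v := by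
  simp only [omega0, ← Finset.sum_sub_distrib]
  refine Finset.sum_congr rfl fun i _ => ?_
  simp [Prod.fst_sub, Prod.snd_sub]
  ring

lemma omega0_nondeg (a : PQ n) (h : ∀ v, omega0 n a v = 0) : a = 0 := by
  have h1 : ∀ k, a.1 k = 0 := fun k => by
    have := h ((0 : Fin n → ℝ), Pi.single k 1)
    simpa [omega0, Pi.single_apply, mul_ite, Finset.sum_ite_eq'] using this
  have h2 : ∀ k, a.2 k = 0 := fun k => by
    have := h (Pi.single k 1, (0 : Fin n → ℝ))
    simpa [omega0, Pi.single_apply, mul_ite, Finset.sum_ite_eq'] using this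
  ext k
  · exact h1 k
  · exact h2 k

lemma sum_single (u : Fin n → ℝ) : ∑ j, u j • (Pi.single j 1 : Fin n → ℝ) = u := by
  funext k
  simp [Finset.sum_apply, Pi.single_apply, Finset.sum_ite_eq']

lemma basis_decomp (u : PQ n) :
    u = ∑ j, u.1 j • ((Pi.single j 1, 0) : PQ n) + ∑ j, u.2 j • ((0, Pi.single j 1) : PQ n) := by
  refine Prod.ext ?_ ?_
  · rw [Prod.fst_add, Prod.fst_sum, Prod.fst_sum]
    simp only [Prod.smul_fst, smul_zero]
    rw [Finset.sum_const_zero, add_zero, sum_single]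
  · rw [Prod.snd_add, Prod.snd_sum, Prod.snd_sum]
    simp only [Prod.smul_snd, smul_zero]
    rw [Finset.sum_const_zero, zero_add, sum_single]

/-- Coordinate projections as continuous linear maps. -/
def Pc (n : ℕ) (j : Fin n) : PQ n →L[ℝ] ℝ :=
  (ContinuousLinearMap.proj j).comp (ContinuousLinearMap.fst ℝ (Fin n → ℝ) (Fin n → ℝ))

def Qc (n : ℕ) (j : Fin n) : PQ n →L[ℝ] ℝ :=
  (ContinuousLinearMap.proj j).comp (ContinuousLinearMap.snd ℝ (Fin n → ℝ) (Fin n → ℝ))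

@[simp] lemma Pc_apply (j : Fin n) (y : PQ n) : Pc n j y = y.1 j := rfl
@[simp] lemma Qc_apply (j : Fin n) (y : PQ n) : Qc n j y = y.2 j := rfl

/-- From ω-preservation at a point, the derivative is surjective. -/
lemma surj_of_omega {D : PQ n →L[ℝ] PQ n}
    (hω : ∀ u v, omega0 n (D u) (D v) = omega0 n u v) : Function.Surjective D := by
  have hinj : Function.Injective D := by
    intro u v huv
    have h0 : D (u - v) = 0 := by rw [map_sub, huv, sub_self]
    have : u - v = 0 := by
      apply omega0_nondeg
      intro w
      have := hω (u - v) w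
      rw [h0, omega0_zero_left] at this
      exact this.symm
    exact sub_eq_zero.mp this
  have := LinearMap.injective_iff_surjective (f := (D : PQ n →ₗ[ℝ] PQ n))
  exact this.mp hinj

/-- If a linear functional `L = ω₀(c,·)` satisfies `L∘Ψ = L` near `x`, then `DΨ(x)` fixes `c`. -/
lemma fix_dir {Ψ : PQ n → PQ n} {x : PQ n} {D : PQ n →L[ℝ] PQ n}
    (hD : HasFDerivAt Ψ D x)
    (hω : ∀ u v, omega0 n (D u) (D v) = omega0 n u v)
    (L : PQ n →L[ℝ] ℝ) (c : PQ n) (hLc : ∀ y, L y = omega0 n c y)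
    (hcoord : (fun z => L (Ψ z)) =ᶠ[𝓝 x] fun z => L z) :
    D c = c := by
  have hsurj : Function.Surjective D := surj_of_omega hω
  have hL : ∀ v, L (D v) = L v := by
    have h1 : HasFDerivAt (fun z => L (Ψ z)) (L.comp D) x := L.hasFDerivAt.comp x hD
    have h2 : HasFDerivAt (fun z => L (Ψ z)) L x :=
      L.hasFDerivAt.congr_of_eventuallyEq hcoord
    have h3 := h1.unique h2
    intro v
    calc L (D v) = (L.comp D) v := rfl
      _ = L v := by rw [h3]
  have key : ∀ w, omega0 n (D c - c) w = 0 := by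
    intro w
    obtain ⟨v, rfl⟩ := hsurj w
    rw [omega0_sub_left, hω, ← hLc, ← hLc, hL, sub_self]
  have h0 := omega0_nondeg _ key
  exact sub_eq_zero.mp h0

/-- translation invariance along a direction fixed by the derivative. -/
lemma translate' {Ψ : PQ n → PQ n} {B : Set (PQ n)} (hconv : Convex ℝ B)
    (hdiff : ∀ x ∈ B, HasFDerivAt Ψ (fderiv ℝ Ψ x) x)
    {s w : PQ n} (hs : s ∈ B) (hsw : s + w ∈ B)
    (hfix : ∀ x ∈ B, fderiv ℝ Ψ x w = w) :
    Ψ (s + w) = Ψ s + w := by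
  set f : ℝ → PQ n := fun t => Ψ (s + t • w) - t • w with hf
  have seg : ∀ t ∈ Set.Icc (0:ℝ) 1, s + t • w ∈ B := by
    intro t ht
    have h := hconv hs hsw (by linarith [ht.2] : (0:ℝ) ≤ 1 - t) ht.1 (by ring)
    have he : (1 - t) • s + t • (s + w) = s + t • w := by
      rw [smul_add, sub_smul, one_smul]; abel
    rwa [he] at h
  have hder : ∀ t ∈ Set.Icc (0:ℝ) 1, HasDerivWithinAt f 0 (Set.Icc (0:ℝ) 1) t := by
    intro t ht
    have h1 : HasDerivAt (fun t : ℝ => s + t • w) w t := by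
      simpa using ((hasDerivAt_id t).smul_const w).const_add s
    have h2 : HasDerivAt (fun t : ℝ => Ψ (s + t • w)) (fderiv ℝ Ψ (s + t • w) w) t :=
      (hdiff _ (seg t ht)).comp_hasDerivAt t h1
    have h3 : HasDerivAt f (fderiv ℝ Ψ (s + t • w) w - w) t :=
      h2.sub (by simpa using (hasDerivAt_id t).smul_const w)
    rw [hfix _ (seg t ht), sub_self] at h3
    exact h3.hasDerivWithinAt
  have hb := Convex.norm_image_sub_le_of_norm_hasDerivWithin_le (f' := fun _ => (0 : PQ n))
    (C := 0) hder (fun t _ => by simp) (convex_Icc 0 1)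
    (Set.left_mem_Icc.2 zero_le_one) (Set.right_mem_Icc.2 zero_le_one)
  have hb0 : f 1 = f 0 := by
    have h' : ‖f 1 - f 0‖ ≤ 0 := by simpa using hb
    have := le_antisymm h' (norm_nonneg _)
    rwa [norm_eq_zero, sub_eq_zero] at this
  have e1 : f 1 = Ψ (s + w) - w := by simp [hf]
  have e0 : f 0 = Ψ s := by simp [hf]
  rw [e1, e0, sub_eq_iff_eq_add] at hb0
  exact hb0

/-- A linear map fixing the relevant basis directions fixes any vector supported there. -/
lemma fix_combo {D : PQ n →L[ℝ] PQ n} {a b : ℕ}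
    (hp : ∀ j : Fin n, j.1 < a → D (Pi.single j 1, 0) = (Pi.single j 1, 0))
    (hq : ∀ j : Fin n, j.1 < b → D (0, Pi.single j 1) = (0, Pi.single j 1))
    (w : PQ n) (hw1 : ∀ j : Fin n, ¬ j.1 < a → w.1 j = 0)
    (hw2 : ∀ j : Fin n, ¬ j.1 < b → w.2 j = 0) : D w = w := by
  conv_lhs => rw [basis_decomp w]
  rw [map_add, map_sum, map_sum]
  simp only [map_smul]
  have e1 : ∀ j ∈ Finset.univ, w.1 j • D (Pi.single j 1, 0) =
      w.1 j • ((Pi.single j 1, 0) : PQ n) := by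
    intro j _
    by_cases hj : j.1 < a
    · rw [hp j hj]
    · rw [hw1 j hj, zero_smul, zero_smul]
  have e2 : ∀ j ∈ Finset.univ, w.2 j • D (0, Pi.single j 1) =
      w.2 j • ((0, Pi.single j 1) : PQ n) := by
    intro j _
    by_cases hj : j.1 < b
    · rw [hq j hj]
    · rw [hw2 j hj, zero_smul, zero_smul]
  rw [Finset.sum_congr rfl e1, Finset.sum_congr rfl e2, ← basis_decomp w]

/-- Zeroing out some coordinates keeps a point inside the ball. -/
lemma trunc_mem_ball {r : ℝ} {z : PQ n} (hz : z ∈ Metric.ball (0 : PQ n) r) (a b : ℕ) :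
    ((fun k : Fin n => if k.1 < a then 0 else z.1 k,
      fun k : Fin n => if k.1 < b then 0 else z.2 k) : PQ n) ∈ Metric.ball (0 : PQ n) r := by
  rw [mem_ball_zero_iff] at hz ⊢
  refine lt_of_le_of_lt ?_ hz
  rw [Prod.norm_def, Prod.norm_def]
  refine max_le_max ?_ ?_
  · refine (pi_norm_le_iff_of_nonneg (norm_nonneg _)).2 fun k => ?_
    by_cases hk : k.1 < a
    · simp [hk]
    · simpa [hk] using norm_le_pi_norm z.1 k
  · refine (pi_norm_le_iff_of_nonneg (norm_nonneg _)).2 fun k => ?_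
    by_cases hk : k.1 < b
    · simp [hk]
    · simpa [hk] using norm_le_pi_norm z.2 k

end Aux

/-- any local symplectomorphism of `ω₀` preserving `p₁`, with
`qᵢ∘Ψ ∈ I_{2i−1}` for all `i` and `pᵢ∘Ψ − pᵢ ∈ I_{2i−2}` for `i ≥ 2`, is the
identity near `0`. -/
theorem isotropy_is_identity (n : ℕ) (hn : 1 ≤ n) (Ψ : PQ n → PQ n)
    (hΨ : IsLocalSymp n Ψ)
    (hp1 : ∀ᶠ z in 𝓝 (0 : PQ n), (Ψ z).1 ⟨0, hn⟩ = z.1 ⟨0, hn⟩)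
    (hP : ∀ i : Fin n, 1 ≤ i.1 → InIdeal n (2 * i.1) (fun z => (Ψ z).1 i - z.1 i))
    (hQ : ∀ i : Fin n, InIdeal n (2 * i.1 + 1) (fun z => (Ψ z).2 i)) :
    ∀ᶠ z in 𝓝 (0 : PQ n), Ψ z = z := by
  rw [IsLocalSymp] at hΨ
  obtain ⟨hΨ0, hsm, hbij, hω⟩ := hΨ
  rw [SmoothGerm] at hsm
  obtain ⟨U, hU_nhds, hU_smooth⟩ := hsm
  have hVopen : IsOpen (interior U) := isOpen_interior
  have hV_nhds : interior U ∈ 𝓝 (0 : PQ n) := interior_mem_nhds.2 hU_nhds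
  have hVdiff : DifferentiableOn ℝ Ψ (interior U) :=
    (hU_smooth.mono interior_subset).differentiableOn (by simp)
  -- uniform choice of coefficient functions
  have hPa : ∀ i : Fin n, ∃ c : Fin (2 * i.1) → (PQ n → ℝ), ∀ᶠ z in 𝓝 (0 : PQ n),
      (Ψ z).1 i - z.1 i = ∑ j : Fin (2 * i.1), c j z * genFun n j.1 z := by
    intro i
    rcases Nat.eq_zero_or_pos i.1 with h0 | h1
    · refine ⟨fun _ _ => 0, ?_⟩
      filter_upwards [hp1] with z hz
      have hi : i = ⟨0, hn⟩ := Fin.ext h0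
      simp [hi, hz]
    · have h := hP i h1
      rw [InIdeal] at h
      obtain ⟨c, _, hc⟩ := h
      exact ⟨c, hc⟩
  choose cP hcP using hPa
  have hQa : ∀ i : Fin n, ∃ c : Fin (2 * i.1 + 1) → (PQ n → ℝ), ∀ᶠ z in 𝓝 (0 : PQ n),
      (Ψ z).2 i = ∑ j : Fin (2 * i.1 + 1), c j z * genFun n j.1 z := by
    intro i
    have h := hQ i
    rw [InIdeal] at h
    obtain ⟨c, _, hc⟩ := h
    exact ⟨c, hc⟩
  choose cQ hcQ using hQa
  have hVev : ∀ᶠ z in 𝓝 (0 : PQ n), z ∈ interior U := hV_nhds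
  have hall := (Filter.eventually_all.2 hcP).and ((Filter.eventually_all.2 hcQ).and
    (hω.and hVev))
  obtain ⟨r, hr, hball⟩ := Metric.eventually_nhds_iff_ball.1 hall
  have hBo : IsOpen (Metric.ball (0 : PQ n) r) := Metric.isOpen_ball
  have hBc : Convex ℝ (Metric.ball (0 : PQ n) r) := convex_ball 0 r
  have hdiffB : ∀ x ∈ Metric.ball (0 : PQ n) r, HasFDerivAt Ψ (fderiv ℝ Ψ x) x := fun x hx =>
    (hVdiff.differentiableAt (hVopen.mem_nhds (hball x hx).2.2.2)).hasFDerivAt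
  have hωB : ∀ x ∈ Metric.ball (0 : PQ n) r, ∀ u v : PQ n,
      omega0 n (fderiv ℝ Ψ x u) (fderiv ℝ Ψ x v) = omega0 n u v :=
    fun x hx => (hball x hx).2.2.1
  have hPB : ∀ z ∈ Metric.ball (0 : PQ n) r, ∀ i : Fin n,
      (Ψ z).1 i - z.1 i = ∑ j : Fin (2 * i.1), cP i j z * genFun n j.1 z :=
    fun z hz => (hball z hz).1
  have hQB : ∀ z ∈ Metric.ball (0 : PQ n) r, ∀ i : Fin n,
      (Ψ z).2 i = ∑ j : Fin (2 * i.1 + 1), cQ i j z * genFun n j.1 z :=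
    fun z hz => (hball z hz).2.1
  -- main induction
  have main : ∀ m : ℕ, ∀ hm : m < n,
      (∀ z ∈ Metric.ball (0 : PQ n) r, (Ψ z).1 ⟨m, hm⟩ = z.1 ⟨m, hm⟩) ∧
      (∀ z ∈ Metric.ball (0 : PQ n) r, (Ψ z).2 ⟨m, hm⟩ = z.2 ⟨m, hm⟩) := by
    intro m
    induction m using Nat.strong_induction_on with
    | _ m IH =>
    intro hm
    -- directions fixed thanks to the inductive hypothesis
    have fixp : ∀ x ∈ Metric.ball (0 : PQ n) r, ∀ j : Fin n, j.1 < m →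
        fderiv ℝ Ψ x (Pi.single j 1, 0) = (Pi.single j 1, 0) := by
      intro x hx j hj
      refine fix_dir (hdiffB x hx) (hωB x hx) (Qc n j) _
        (fun y => (omega0_pdir j y).symm) ?_
      refine Filter.eventuallyEq_of_mem (hBo.mem_nhds hx) fun z hz => ?_
      have h := (IH j.1 hj j.2).2 z hz
      simpa using h
    have fixq : ∀ x ∈ Metric.ball (0 : PQ n) r, ∀ j : Fin n, j.1 < m →
        fderiv ℝ Ψ x (0, Pi.single j 1) = (0, Pi.single j 1) := by
      intro x hx j hj
      refine fix_dir (hdiffB x hx) (hωB x hx) (-(Pc n j)) _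
        (fun y => by simp [omega0_qdir]) ?_
      refine Filter.eventuallyEq_of_mem (hBo.mem_nhds hx) fun z hz => ?_
      have h := (IH j.1 hj j.2).1 z hz
      simpa using h
    -- Step 1 : the `p_m`-component
    have hPm : ∀ z ∈ Metric.ball (0 : PQ n) r, (Ψ z).1 ⟨m, hm⟩ = z.1 ⟨m, hm⟩ := by
      intro z hz
      set s : PQ n := (fun k : Fin n => if k.1 < m then 0 else z.1 k,
                       fun k : Fin n => if k.1 < m then 0 else z.2 k) with hs
      have hsB : s ∈ Metric.ball (0 : PQ n) r := trunc_mem_ball hz m m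
      have hfixw : ∀ x ∈ Metric.ball (0 : PQ n) r, fderiv ℝ Ψ x (z - s) = z - s := by
        intro x hx
        refine fix_combo (a := m) (b := m) (fixp x hx) (fixq x hx) _ ?_ ?_
        · intro j hj
          show z.1 j - s.1 j = 0
          simp [hs, hj]
        · intro j hj
          show z.2 j - s.2 j = 0
          simp [hs, hj]
      have hzs : s + (z - s) = z := by abel
      have htrans : Ψ z = Ψ s + (z - s) := by
        have h := translate' hBc hdiffB hsB (by rwa [hzs]) hfixw
        rwa [hzs] at h
      have hgen : ∀ j : Fin (2 * m), genFun n j.1 s = 0 := by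
        intro j
        have hjl : j.1 < 2 * m := j.2
        have hj2 : j.1 / 2 < n := by omega
        rw [genFun, dif_pos hj2]
        by_cases hpar : j.1 % 2 = 0
        · rw [if_pos hpar]
          show (if j.1 / 2 < m then 0 else z.2 _) = 0
          rw [if_pos (by omega)]
        · rw [if_neg hpar]
          show (if j.1 / 2 < m then 0 else z.1 _) = 0
          rw [if_pos (by omega)]
      have hPs : (Ψ s).1 ⟨m, hm⟩ = s.1 ⟨m, hm⟩ := by
        have h := hPB s hsB ⟨m, hm⟩
        rw [Finset.sum_eq_zero (fun j _ => by rw [hgen j, mul_zero])] at h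
        exact sub_eq_zero.mp h
      have hcomp : (Ψ z).1 ⟨m, hm⟩ = (Ψ s).1 ⟨m, hm⟩ + (z.1 ⟨m, hm⟩ - s.1 ⟨m, hm⟩) := by
        rw [htrans]; rfl
      rw [hcomp, hPs]
      ring
    -- the new fixed `q_m`-direction
    have fixq' : ∀ x ∈ Metric.ball (0 : PQ n) r, ∀ j : Fin n, j.1 < m + 1 →
        fderiv ℝ Ψ x (0, Pi.single j 1) = (0, Pi.single j 1) := by
      intro x hx j hj
      rcases Nat.lt_or_ge j.1 m with hjm | hjm
      · exact fixq x hx j hjm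
      · have hjm' : j.1 = m := by omega
        refine fix_dir (hdiffB x hx) (hωB x hx) (-(Pc n j)) _
          (fun y => by simp [omega0_qdir]) ?_
        refine Filter.eventuallyEq_of_mem (hBo.mem_nhds hx) fun z hz => ?_
        have hje : j = ⟨m, hm⟩ := Fin.ext hjm'
        have h := hPm z hz
        rw [← hje] at h
        simpa using h
    -- Step 2 : the `q_m`-component
    have hQm : ∀ z ∈ Metric.ball (0 : PQ n) r, (Ψ z).2 ⟨m, hm⟩ = z.2 ⟨m, hm⟩ := by
      intro z hz
      set s : PQ n := (fun k : Fin n => if k.1 < m then 0 else z.1 k,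
                       fun k : Fin n => if k.1 < m + 1 then 0 else z.2 k) with hs
      have hsB : s ∈ Metric.ball (0 : PQ n) r := trunc_mem_ball hz m (m + 1)
      have hfixw : ∀ x ∈ Metric.ball (0 : PQ n) r, fderiv ℝ Ψ x (z - s) = z - s := by
        intro x hx
        refine fix_combo (a := m) (b := m + 1) (fixp x hx) (fixq' x hx) _ ?_ ?_
        · intro j hj
          show z.1 j - s.1 j = 0
          simp [hs, hj]
        · intro j hj
          show z.2 j - s.2 j = 0
          simp [hs, hj, show ¬ j.1 ≤ m by omega]
      have hzs : s + (z - s) = z := by abel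
      have htrans : Ψ z = Ψ s + (z - s) := by
        have h := translate' hBc hdiffB hsB (by rwa [hzs]) hfixw
        rwa [hzs] at h
      have hgen : ∀ j : Fin (2 * m + 1), genFun n j.1 s = 0 := by
        intro j
        have hjl : j.1 < 2 * m + 1 := j.2
        have hj2 : j.1 / 2 < n := by omega
        rw [genFun, dif_pos hj2]
        by_cases hpar : j.1 % 2 = 0
        · rw [if_pos hpar]
          show (if j.1 / 2 < m + 1 then 0 else z.2 _) = 0
          rw [if_pos (by omega)]
        · rw [if_neg hpar]
          show (if j.1 / 2 < m then 0 else z.1 _) = 0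
          rw [if_pos (by omega)]
      have hQs : (Ψ s).2 ⟨m, hm⟩ = 0 := by
        have h := hQB s hsB ⟨m, hm⟩
        rw [Finset.sum_eq_zero (fun j _ => by rw [hgen j, mul_zero])] at h
        exact h
      have hcomp : (Ψ z).2 ⟨m, hm⟩ = (Ψ s).2 ⟨m, hm⟩ + (z.2 ⟨m, hm⟩ - s.2 ⟨m, hm⟩) := by
        rw [htrans]; rfl
      have hs2 : s.2 ⟨m, hm⟩ = 0 := by
        show (if m < m + 1 then 0 else z.2 _) = 0
        rw [if_pos (Nat.lt_succ_self m)]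
      rw [hcomp, hQs, hs2]
      ring
    exact ⟨hPm, hQm⟩
  refine Filter.eventually_of_mem (Metric.ball_mem_nhds (0 : PQ n) hr) fun z hz => ?_
  refine Prod.ext ?_ ?_
  · funext k
    have h := (main k.1 k.2).1 z hz
    simpa using h
  · funext k
    have h := (main k.1 k.2).2 z hz
    simpa using h
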